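/- Let γ ≥ 0 and k ≥ 0 be real constants, and let p : ℝ → ℝ be differentiable with p′(t) = −γ·p(t) + k·p(t)·(1 − p(t)) for all t ≥ 0. If p(0) ∈ [0,1], then p(t) ∈ [0,1] for all t ≥ 0. -/

import Mathlib

open Set Filter Topology

/-- Grönwall-type sign lemma: if `g` has derivative `g' t` on `[a,b]`, `g a ≥ 0`, and whenever
`g t ≤ 0` (for `t ∈ [a,b)`) we have `g' t ≥ K * g t`, then `g ≥ 0` on `[a,b]`. -/
lemma nonneg_of_deriv_ge {g g' : ℝ → ℝ} {a b K : ℝ}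
    (hg : ∀ t ∈ Set.Icc a b, HasDerivAt g (g' t) t)
    (hbound : ∀ t ∈ Set.Ico a b, g t ≤ 0 → K * g t ≤ g' t)
    (ha : 0 ≤ g a) : ∀ t ∈ Set.Icc a b, 0 ≤ g t := by
  set f : ℝ → ℝ := fun t => max (-g t) 0 with hf_def
  set F : ℝ → ℝ := fun t => if g t < 0 then -g' t else 0 with hF_def
  have hgc : ContinuousOn g (Set.Icc a b) := fun t ht => (hg t ht).continuousAt.continuousWithinAt
  have hfc : ContinuousOn f (Set.Icc a b) := (hgc.neg.sup continuousOn_const)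
  have key : ∀ x ∈ Set.Icc a b, f x ≤ gronwallBound 0 K 0 (x - a) := by
    refine le_gronwallBound_of_liminf_deriv_right_le (f' := F) (δ := 0) (K := K) (ε := 0) hfc ?_ ?_ ?_
    · -- liminf slope condition
      intro x hx r hr
      have hx' : x ∈ Set.Icc a b := Set.mem_Icc_of_Ico hx
      rcases lt_trichotomy (g x) 0 with hlt | heq | hgt
      · -- g x < 0 : f = -g near x
        have hFx : F x = -g' x := if_pos hlt
        rw [hFx] at hr
        have hslope : Filter.Tendsto (slope (fun t => -g t) x) (𝓝[≠] x) (𝓝 (-g' x)) :=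
          hasDerivAt_iff_tendsto_slope.mp ((hg x hx').neg)
        have h1 : ∀ᶠ z in 𝓝[>] x, slope (fun t => -g t) x z < r :=
          (hslope.mono_left (nhdsWithin_mono x fun z hz => ne_of_gt hz)).eventually
            (Filter.Tendsto.eventually_lt_const hr (by exact Filter.tendsto_id) |>.mono (fun _ h => h)) |>.mono (fun _ h => h)
        have h2 : ∀ᶠ z in 𝓝[>] x, g z < 0 :=
          ((hg x hx').continuousAt.eventually_lt_const hlt).filter_mono nhdsWithin_le_nhds
        refine ((h1.and h2).mono ?_).frequently
        rintro z ⟨h1z, h2z⟩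
        have : f z - f x = -g z - -g x := by
          simp only [hf_def]
          rw [max_eq_left (by linarith), max_eq_left (by linarith)]
        rw [this]
        simpa [slope_def_field, div_eq_inv_mul] using h1z
      · -- g x = 0
        have hFx : F x = 0 := if_neg (by simp [heq])
        rw [hFx] at hr
        have hg'x : 0 ≤ g' x := by
          have := hbound x hx (le_of_eq heq)
          rw [heq, mul_zero] at this; exact this
        have hslope : Filter.Tendsto (slope (fun t => -g t) x) (𝓝[≠] x) (𝓝 (-g' x)) :=
          hasDerivAt_iff_tendsto_slope.mp ((hg x hx').neg)
        have h1 : ∀ᶠ z in 𝓝[≠] x, slope (fun t => -g t) x z < r :=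
          hslope.eventually_lt_const (by linarith)
        have h1' : ∀ᶠ z in 𝓝[>] x, slope (fun t => -g t) x z < r :=
          h1.filter_mono (nhdsWithin_mono x fun z hz => ne_of_gt hz)
        have h3 : ∀ᶠ z in 𝓝[>] x, x < z := eventually_mem_nhdsWithin
        refine ((h1'.and h3).mono ?_).frequently
        rintro z ⟨h1z, h3z⟩
        have hfx : f x = 0 := by simp [hf_def, heq]
        rw [hfx, sub_zero]
        have hzx : (0:ℝ) < z - x := by linarith
        have hr0 : (0:ℝ) < r := hr
        rw [hf_def]
        simp only
        rcases le_or_gt (-g z) 0 with hgz | hgz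
        · rw [max_eq_right hgz]; rw [mul_zero]; exact hr0
        · rw [max_eq_left hgz.le]
          have : slope (fun t => -g t) x z = (z - x)⁻¹ * (-g z) := by
            rw [slope_def_field, heq]; ring
          rw [← this]; exact h1z
      · -- g x > 0 : f = 0 near x
        have hFx : F x = 0 := if_neg (by linarith)
        rw [hFx] at hr
        have h2 : ∀ᶠ z in 𝓝[>] x, 0 < g z :=
          ((hg x hx').continuousAt.eventually_const_lt hgt).filter_mono nhdsWithin_le_nhds
        refine (h2.mono ?_).frequently
        intro z h2z
        have hfz : f z = 0 := by simp [hf_def]; linarith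
        have hfx : f x = 0 := by simp [hf_def]; linarith
        rw [hfz, hfx, sub_zero, mul_zero]
        exact hr
    · -- f a ≤ 0
      simp [hf_def]; linarith
    · -- bound : F x ≤ K * f x + 0
      intro x hx
      rcases lt_or_ge (g x) 0 with hlt | hge
      · have hFx : F x = -g' x := if_pos hlt
        have hfx : f x = -g x := max_eq_left (by linarith)
        rw [hFx, hfx, add_zero]
        have := hbound x hx hlt.le
        linarith [this]
      · have hFx : F x = 0 := if_neg (not_lt.mpr hge)
        have hfx : f x = 0 := max_eq_right (by linarith)
        rw [hFx, hfx, mul_zero, add_zero]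
  intro t ht
  have := key t ht
  rw [gronwallBound_ε0_δ0] at this
  have : -g t ≤ 0 := le_trans (le_max_left _ _) this
  linarith

/-- Forward invariance of `[0,1]` for the belief ODE `p' = -γp + kp(1-p)` with `γ, k ≥ 0`. -/
theorem belief_ode_invariance
    (γ k : ℝ) (hγ : 0 ≤ γ) (hk : 0 ≤ k) (p : ℝ → ℝ)
    (hode : ∀ t : ℝ, 0 ≤ t → HasDerivAt p (-γ * p t + k * p t * (1 - p t)) t)
    (h0 : p 0 ∈ Set.Icc (0 : ℝ) 1) :
    ∀ t : ℝ, 0 ≤ t → p t ∈ Set.Icc (0 : ℝ) 1 := by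
  intro T hT
  -- p is continuous on [0, T], hence bounded
  have hpc : ContinuousOn p (Set.Icc 0 T) := fun t ht => (hode t ht.1).continuousAt.continuousWithinAt
  obtain ⟨M, hM⟩ : ∃ M, ∀ t ∈ Set.Icc (0:ℝ) T, |p t| ≤ M := by
    obtain ⟨M, hM⟩ := (isCompact_Icc.image_of_continuousOn hpc).isBounded.exists_norm_le
    exact ⟨M, fun t ht => hM _ (Set.mem_image_of_mem p ht)⟩
  constructor
  · -- lower bound:  0 ≤ p T
    have := nonneg_of_deriv_ge (g := p) (g' := fun t => -γ * p t + k * p t * (1 - p t))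
      (a := 0) (b := T) (K := k * (1 + M))
      (fun t ht => hode t ht.1)
      (fun t ht hpt => by
        have hMt : -p t ≤ M := by have := hM t (Set.mem_Icc_of_Ico ht); rw [abs_le] at this; linarith
        have hq : 0 ≤ -p t := by linarith
        have hM0 : 0 ≤ M := le_trans hq hMt
        nlinarith [mul_nonneg hγ hq,
          mul_nonneg (mul_nonneg hk hq) (sub_nonneg.mpr hMt)])
      h0.1
    exact this T ⟨hT, le_refl T⟩
  · -- upper bound:  p T ≤ 1
    have := nonneg_of_deriv_ge (g := fun t => 1 - p t)
      (g' := fun t => -(-γ * p t + k * p t * (1 - p t)))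
      (a := 0) (b := T) (K := 0)
      (fun t ht => by
        exact (hode t ht.1).const_sub (1:ℝ))
      (fun t ht hpt => by
        have hp1 : 1 ≤ p t := by linarith
        nlinarith [mul_nonneg hγ (by linarith : (0:ℝ) ≤ p t),
          mul_nonneg (mul_nonneg hk (by linarith : (0:ℝ) ≤ p t)) (by linarith : (0:ℝ) ≤ p t - 1)])
      (by linarith [h0.2])
    have := this T ⟨hT, le_refl T⟩
    linarith
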